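/- Let (U_α)_{α>0} be a sub-Markovian resolvent of kernels on a measurable space (E, B), and let v: E → [0,∞] be measurable with v ≤ 1 on a subset M ∈ B, such that v restricted to M is U_β-excessive for the restricted resolvent on M and U_α(1_{E∖M}) = 0 for all α. Define w₁ on E by w₁ = v on M and w₁ = 1 on E∖M. Then w₁ is U_β-supermedian on E, i.e., α U_{α+β} w₁ ≤ w₁ for all α > 0. -/
import Mathlib


open scoped Classical
open ENNReal

/-- Step (1) of the proof of Theorem 2.2: an excessive function `v ≤ 1` on `M`
extends, by the value `1` on `E∖M`, to a `U_β`-supermedian function on `E`,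
provided the resolvent does not charge `E∖M`. -/
theorem stmt5 {E : Type*} [MeasurableSpace E]
    (U : ℝ → (E → ℝ≥0∞) → (E → ℝ≥0∞))
    (hmono : ∀ α > (0:ℝ), ∀ f g : E → ℝ≥0∞, (∀ x, f x ≤ g x) → ∀ x, U α f x ≤ U α g x)
    (hadd : ∀ α > (0:ℝ), ∀ f g : E → ℝ≥0∞, ∀ x, U α (f + g) x = U α f x + U α g x)
    (hsub : ∀ α > (0:ℝ), ∀ x, ENNReal.ofReal α * U α (fun _ => 1) x ≤ 1)
    (β : ℝ) (hβ : 0 < β)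
    (M : Set E) (hMmeas : MeasurableSet M)
    (hnull : ∀ α > (0:ℝ), ∀ x, U α (Set.indicator Mᶜ fun _ => 1) x = 0)
    (v : E → ℝ≥0∞) (hvmeas : Measurable v) (hv1 : ∀ x ∈ M, v x ≤ 1)
    (hexc : ∀ α > (0:ℝ), ∀ x ∈ M,
      ENNReal.ofReal α * U (α + β) (fun y => if y ∈ M then v y else 0) x ≤ v x)
    (hexcsup : ∀ x ∈ M,
      (⨆ α : {a : ℝ // 0 < a},
        ENNReal.ofReal (α : ℝ) * U ((α : ℝ) + β) (fun y => if y ∈ M then v y else 0) x) = v x)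
    (w₁ : E → ℝ≥0∞) (hw₁ : ∀ x, w₁ x = if x ∈ M then v x else 1) :
    ∀ α > (0:ℝ), ∀ x, ENNReal.ofReal α * U (α + β) w₁ x ≤ w₁ x := by
  intro α hα x
  have hαβ : (0:ℝ) < α + β := by linarith
  set f : E → ℝ≥0∞ := fun y => if y ∈ M then v y else 0 with hf
  set g : E → ℝ≥0∞ := Set.indicator Mᶜ fun _ => 1 with hg
  have hsplit : w₁ = f + g := by
    funext y
    simp only [hw₁ y, hf, hg, Pi.add_apply, Set.indicator_apply, Set.mem_compl_iff]
    by_cases hy : y ∈ M <;> simp [hy]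
  have hU : U (α + β) w₁ x = U (α + β) f x := by
    rw [hsplit, hadd _ hαβ, hnull _ hαβ, add_zero]
  rw [hU]
  by_cases hx : x ∈ M
  · rw [hw₁ x, if_pos hx]
    exact hexc α hα x hx
  · rw [hw₁ x, if_neg hx]
    calc ENNReal.ofReal α * U (α + β) f x
        ≤ ENNReal.ofReal (α + β) * U (α + β) (fun _ => 1) x := by
          gcongr
          · linarith
          · refine hmono _ hαβ _ _ (fun y => ?_) x
            by_cases hy : y ∈ M <;> simp [hf, hy, hv1 y]
      _ ≤ 1 := hsub _ hαβ x
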